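/- Let K > 0, k ∈ ℝ, n > 0, D ∈ ℝ, and let a : ℝ → ℝ be three times differentiable on an open interval I with a > 0 on I. Define H(t) = a'(t)/a(t). Assume for all t ∈ I: 0 = −(2/K²) H'(t) − (n D/3) a(t)^(−n) + (2k/K²) a(t)^(−2). Then the function F(t) = (3/K²)(H(t)² + H'(t)/3 + 2k/(3 a(t)²)) + (n−6) D/(6 a(t)^n) has derivative zero on I; in particular there is a constant V₀ with F(t) = V₀ for all t ∈ I. -/

import Mathlib

/-- Equation (3.14) implies that the potential expression (3.16)
is constant: F' = 0 on I and F ≡ V₀ for some constant V₀. -/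
theorem constraint_implies_constant_potential
    (K k n D : ℝ) (hK : 0 < K) (hn : 0 < n)
    (t₁ t₂ : ℝ) (a : ℝ → ℝ)
    (ha : ∀ t ∈ Set.Ioo t₁ t₂, DifferentiableAt ℝ a t)
    (ha' : ∀ t ∈ Set.Ioo t₁ t₂, DifferentiableAt ℝ (deriv a) t)
    (ha'' : ∀ t ∈ Set.Ioo t₁ t₂, DifferentiableAt ℝ (deriv (deriv a)) t)
    (hapos : ∀ t ∈ Set.Ioo t₁ t₂, 0 < a t)
    (H F : ℝ → ℝ)
    (hH : H = fun t => deriv a t / a t)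
    (hF : F = fun t => 3 / K ^ 2 * (H t ^ 2 + deriv H t / 3 + 2 * k / (3 * a t ^ 2))
      + (n - 6) * D / (6 * a t ^ n))
    (h314 : ∀ t ∈ Set.Ioo t₁ t₂,
      0 = -(2 / K ^ 2) * deriv H t - n * D / 3 * a t ^ (-n)
        + 2 * k / K ^ 2 * a t ^ (-2 : ℝ)) :
    (∀ t ∈ Set.Ioo t₁ t₂, deriv F t = 0) ∧
    (∃ V₀ : ℝ, ∀ t ∈ Set.Ioo t₁ t₂, F t = V₀) := by
  have hK2 : (K:ℝ) ^ 2 ≠ 0 := by positivity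
  set G : ℝ → ℝ := fun t => 3 / K ^ 2 * (deriv a t / a t) ^ 2
      + 3 * k / (K ^ 2 * a t ^ 2) - D / a t ^ n with hG
  -- value of deriv H on I
  have hdH : ∀ t ∈ Set.Ioo t₁ t₂, deriv H t
      = -(n * D * K ^ 2 / 6) * (a t ^ n)⁻¹ + k * (a t ^ 2)⁻¹ := by
    intro t ht
    have hA := hapos t ht
    have h1 : a t ^ (-n) = (a t ^ n)⁻¹ := Real.rpow_neg hA.le n
    have h2 : a t ^ (-2 : ℝ) = (a t ^ 2)⁻¹ := by
      rw [Real.rpow_neg hA.le]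
      norm_num [Real.rpow_natCast (a t) 2]
    have h := h314 t ht
    rw [h1, h2] at h
    have hBn : (a t ^ n) ≠ 0 := (Real.rpow_pos_of_pos hA n).ne'
    have hA2 : (a t) ^ 2 ≠ 0 := by positivity
    field_simp at h
    have hX : K ^ 2 * 0 = K ^ 2 * ((-(6 * deriv H t * a t ^ n) - K ^ 2 * (n * D)) * a t ^ 2
        + 6 * k * a t ^ n) := by linear_combination K ^ 2 * h
    have h'' := mul_left_cancel₀ hK2 hX
    field_simp
    linarith [h'']
  have hFG : ∀ t ∈ Set.Ioo t₁ t₂, F t = G t := by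
    intro t ht
    have hA := hapos t ht
    have hBn : (a t ^ n) ≠ 0 := (Real.rpow_pos_of_pos hA n).ne'
    have hA2 : (a t) ^ 2 ≠ 0 := by positivity
    simp only [hF, hG]
    rw [hdH t ht]
    simp only [hH]
    field_simp
    ring
  have hG0 : ∀ t ∈ Set.Ioo t₁ t₂, HasDerivAt G 0 t := by
    intro t ht
    have hA := hapos t ht
    have hAne : a t ≠ 0 := hA.ne'
    have hBpos : (0:ℝ) < a t ^ n := Real.rpow_pos_of_pos hA n
    have hBn : (a t ^ n) ≠ 0 := hBpos.ne'
    have hDa : HasDerivAt a (deriv a t) t := (ha t ht).hasDerivAt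
    have hDa' : HasDerivAt (deriv a) (deriv (deriv a) t) t := (ha' t ht).hasDerivAt
    set A := a t
    set A' := deriv a t
    set A'' := deriv (deriv a) t
    have hHd : HasDerivAt (fun s => deriv a s / a s)
        ((A'' * A - A' * A') / A ^ 2) t := hDa'.div hDa hAne
    have hHeq : deriv H t = (A'' * A - A' * A') / A ^ 2 := by
      rw [hH]; exact hHd.deriv
    have hkey : (A'' * A - A' * A') / A ^ 2
        = -(n * D * K ^ 2 / 6) * (A ^ n)⁻¹ + k * (A ^ 2)⁻¹ := by
      rw [← hHeq]; exact hdH t ht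
    -- term 1
    have h1 : HasDerivAt (fun s => 3 / K ^ 2 * (deriv a s / a s) ^ 2)
        (3 / K ^ 2 * (2 * (A' / A) * ((A'' * A - A' * A') / A ^ 2))) t := by
      have := (hHd.pow 2)
      simpa [mul_comm, mul_assoc, mul_left_comm] using this.const_mul (3 / K ^ 2)
    -- term 2
    have hden2 : HasDerivAt (fun s => K ^ 2 * a s ^ 2) (K ^ 2 * (2 * A * A')) t := by
      have := (hDa.pow 2).const_mul (K ^ 2)
      simpa [mul_comm, mul_assoc, mul_left_comm] using this
    have hden2ne : K ^ 2 * A ^ 2 ≠ 0 := by positivity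
    have h2 : HasDerivAt (fun s => 3 * k / (K ^ 2 * a s ^ 2))
        ((0 * (K ^ 2 * A ^ 2) - 3 * k * (K ^ 2 * (2 * A * A'))) / (K ^ 2 * A ^ 2) ^ 2) t :=
      (hasDerivAt_const t (3 * k)).div hden2 hden2ne
    -- term 3
    have hden3 : HasDerivAt (fun s => a s ^ n) (n * A ^ (n - 1) * A') t := by
      have := hDa.rpow_const (p := n) (Or.inl hAne)
      convert this using 1; ring
    have h3 : HasDerivAt (fun s => D / a s ^ n)
        ((0 * A ^ n - D * (n * A ^ (n - 1) * A')) / (A ^ n) ^ 2) t :=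
      (hasDerivAt_const t D).div hden3 hBn
    have hsum := (h1.add h2).sub h3
    convert hsum using 1
    · rfl
    · rfl
    · rfl
    have hpow : A ^ (n - 1) = A ^ n / A := by
      rw [Real.rpow_sub hA, Real.rpow_one]
    rw [hpow]
    field_simp at hkey ⊢
    linear_combination (-A') * hkey
  have hF0 : ∀ t ∈ Set.Ioo t₁ t₂, HasDerivAt F 0 t := by
    intro t ht
    refine (hG0 t ht).congr_of_eventuallyEq ?_
    filter_upwards [isOpen_Ioo.mem_nhds ht] with s hs using hFG s hs
  refine ⟨fun t ht => (hF0 t ht).deriv, ?_⟩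
  rcases Set.eq_empty_or_nonempty (Set.Ioo t₁ t₂) with he | ⟨t₀, ht₀⟩
  · exact ⟨0, fun t ht => absurd ht (he ▸ Set.notMem_empty t)⟩
  · refine ⟨F t₀, fun t ht => ?_⟩
    have key : ∀ s u : ℝ, s ∈ Set.Ioo t₁ t₂ → u ∈ Set.Ioo t₁ t₂ → s < u → F s = F u := by
      intro s u hs hu hsu
      have hsub : Set.Icc s u ⊆ Set.Ioo t₁ t₂ := Set.Icc_subset_Ioo hs.1 hu.2
      have hcont : ContinuousOn F (Set.Icc s u) := fun x hx =>
        ((hF0 x (hsub hx)).differentiableAt.continuousAt).continuousWithinAt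
      obtain ⟨c, hc, hc'⟩ := exists_hasDerivAt_eq_slope F (fun _ => 0) hsu hcont
        (fun x hx => hF0 x (hsub ⟨hx.1.le, hx.2.le⟩))
      have hus : u - s ≠ 0 := sub_ne_zero.mpr hsu.ne'
      have h0 : (0:ℝ) = (F u - F s) / (u - s) := hc'
      field_simp at h0
      linarith
    rcases lt_trichotomy t t₀ with h | h | h
    · exact key t t₀ ht ht₀ h
    · rw [h]
    · exact (key t₀ t ht₀ ht h).symm
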